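/- There exists an analytic function h on the unit disk such that lim_{|z|→1^-} |h(z)|/log(e/(1-|z|)) = 0 but sup_{z∈D}(1-|z|^2)|h'(z)| = ∞; i.e., the little space X_0 is not contained in the Bloch space. -/

import Mathlib

open Metric

noncomputable def uu (z : ℂ) : ℂ := -Complex.log (1 - z)

noncomputable def hh (z : ℂ) : ℂ :=
  uu z * Complex.sin (uu z) / Complex.log (uu z + 3)

lemma one_sub_re_pos {z : ℂ} (hz : ‖z‖ < 1) : 0 < (1 - z).re := by
  have h1 : |z.re| ≤ ‖z‖ := Complex.abs_re_le_norm z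
  have h2 : ‖z‖ = ‖z‖ := rfl
  have := abs_le.mp h1
  simp only [Complex.sub_re, Complex.one_re]
  linarith [this.2]

lemma slit1 {z : ℂ} (hz : ‖z‖ < 1) : 1 - z ∈ Complex.slitPlane :=
  Complex.mem_slitPlane_iff.mpr (Or.inl (one_sub_re_pos hz))

lemma uu_re {z : ℂ} : (uu z).re = -Real.log (‖1 - z‖) := by
  simp [uu, Complex.log_re]

lemma uu_re_ge {z : ℂ} (hz : ‖z‖ < 1) : -1 ≤ (uu z).re := by
  rw [uu_re]
  have h2 : ‖1 - z‖ ≤ 2 := by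
    calc ‖1 - z‖ ≤ ‖(1:ℂ)‖ + ‖z‖ := by
          simpa using norm_sub_le (1 : ℂ) z
    _ ≤ 2 := by
          have hz' : ‖z‖ < 1 := hz
          simp; linarith
  have : Real.log (‖1 - z‖) ≤ Real.log 2 :=
    Real.log_le_log (lt_of_lt_of_le (one_sub_re_pos hz) (Complex.re_le_norm _)) h2
  have h3 : Real.log 2 ≤ 1 := by
    nlinarith [Real.log_two_lt_d9, Real.log_two_gt_d9]
  linarith

lemma uu_im_le {z : ℂ} (hz : ‖z‖ < 1) : |(uu z).im| ≤ 2 := by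
  have : (uu z).im = -(1 - z).arg := by simp [uu, Complex.log_im]
  rw [this, abs_neg]
  have harg : |(1 - z).arg| ≤ Real.pi / 2 :=
    Complex.abs_arg_le_pi_div_two_iff.mpr (le_of_lt (one_sub_re_pos hz))
  have := Real.pi_le_four
  linarith

lemma slit3 {z : ℂ} (hz : ‖z‖ < 1) : uu z + 3 ∈ Complex.slitPlane := by
  refine Complex.mem_slitPlane_iff.mpr (Or.inl ?_)
  have := uu_re_ge hz
  simp only [Complex.add_re]
  norm_num
  linarith

lemma log3_pos {z : ℂ} (hz : ‖z‖ < 1) : 0 < Real.log ((uu z).re + 3) := by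
  have := uu_re_ge hz
  refine Real.log_pos ?_
  linarith

lemma log3_norm {z : ℂ} (hz : ‖z‖ < 1) :
    Real.log ((uu z).re + 3) ≤ ‖Complex.log (uu z + 3)‖ := by
  have h1 : (uu z + 3).re = (uu z).re + 3 := by simp
  have h2 : (0:ℝ) < (uu z + 3).re := by rw [h1]; linarith [uu_re_ge hz]
  have h3 : (uu z + 3).re ≤ ‖uu z + 3‖ := Complex.re_le_norm _
  have h4 : Real.log ((uu z).re + 3) ≤ Real.log (‖uu z + 3‖) := by
    rw [← h1]; exact Real.log_le_log h2 h3
  calc Real.log ((uu z).re + 3) ≤ (Complex.log (uu z + 3)).re := by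
        rw [Complex.log_re]; exact h4
  _ ≤ |(Complex.log (uu z + 3)).re| := le_abs_self _
  _ ≤ ‖Complex.log (uu z + 3)‖ := Complex.abs_re_le_norm _
  _ = ‖Complex.log (uu z + 3)‖ := rfl

lemma log3_ne {z : ℂ} (hz : ‖z‖ < 1) : Complex.log (uu z + 3) ≠ 0 := by
  intro h
  have := log3_norm hz
  rw [h] at this
  simp at this
  linarith [log3_pos hz]

lemma sin_bound {z : ℂ} (hz : ‖z‖ < 1) : ‖Complex.sin (uu z)‖ ≤ 8 := by
  set w := uu z with hw
  have him := uu_im_le hz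
  have hs : Complex.sin w = (Complex.exp (-w * Complex.I) - Complex.exp (w * Complex.I)) * Complex.I / 2 := rfl
  rw [hs]
  have e1 : ‖Complex.exp (-w * Complex.I)‖ = Real.exp ((-w * Complex.I).re) := Complex.norm_exp _
  have e2 : ‖Complex.exp (w * Complex.I)‖ = Real.exp ((w * Complex.I).re) := Complex.norm_exp _
  have r1 : (-w * Complex.I).re = w.im := by simp
  have r2 : (w * Complex.I).re = -w.im := by simp
  have hb : ∀ y : ℝ, |y| ≤ 2 → Real.exp y ≤ 8 := by
    intro y hy
    have : Real.exp y ≤ Real.exp 2 := Real.exp_le_exp.mpr (le_trans (le_abs_self y) hy)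
    have h2 : Real.exp 2 = Real.exp 1 * Real.exp 1 := by
      rw [← Real.exp_add]; norm_num
    nlinarith [Real.exp_one_lt_d9, Real.exp_pos 1]
  have b1 : ‖Complex.exp (-w * Complex.I)‖ ≤ 8 := by
    rw [e1, r1]; exact hb _ (by simpa using him)
  have b2 : ‖Complex.exp (w * Complex.I)‖ ≤ 8 := by
    rw [e2, r2]; exact hb _ (by simpa [abs_neg] using him)
  calc ‖(Complex.exp (-w * Complex.I) - Complex.exp (w * Complex.I)) * Complex.I / 2‖
      = ‖Complex.exp (-w * Complex.I) - Complex.exp (w * Complex.I)‖ * 1 / 2 := by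
        rw [norm_div, norm_mul, Complex.norm_I]; norm_num
  _ ≤ (‖Complex.exp (-w * Complex.I)‖ + ‖Complex.exp (w * Complex.I)‖) * 1 / 2 := by
        have := norm_sub_le (Complex.exp (-w * Complex.I)) (Complex.exp (w * Complex.I))
        linarith
  _ ≤ 8 := by linarith

lemma hh_bound {z : ℂ} (hz : ‖z‖ < 1) :
    ‖hh z‖ ≤ 8 * (|(uu z).re| + 2) / Real.log ((uu z).re + 3) := by
  have h1 : ‖hh z‖ = ‖uu z * Complex.sin (uu z)‖ / ‖Complex.log (uu z + 3)‖ := by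
    rw [hh, norm_div]
  have h2 : ‖uu z * Complex.sin (uu z)‖ ≤ (|(uu z).re| + 2) * 8 := by
    rw [norm_mul]
    have ha : ‖uu z‖ ≤ |(uu z).re| + 2 := by
      calc ‖uu z‖ ≤ |(uu z).re| + |(uu z).im| := Complex.norm_le_abs_re_add_abs_im _
      _ ≤ |(uu z).re| + 2 := by linarith [uu_im_le hz]
    exact mul_le_mul ha (sin_bound hz) (norm_nonneg _) (by positivity)
  rw [h1]
  have h3 := log3_pos hz
  have h4 := log3_norm hz
  calc ‖uu z * Complex.sin (uu z)‖ / ‖Complex.log (uu z + 3)‖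
      ≤ ((|(uu z).re| + 2) * 8) / Real.log ((uu z).re + 3) :=
        div_le_div₀ (by positivity) h2 h3 h4
  _ = 8 * (|(uu z).re| + 2) / Real.log ((uu z).re + 3) := by ring

lemma uu_hasDeriv {z : ℂ} (hz : ‖z‖ < 1) : HasDerivAt uu ((1 - z)⁻¹) z := by
  have h1 : HasDerivAt (fun w : ℂ => 1 - w) (-1) z := by
    simpa using (hasDerivAt_id z).const_sub 1
  have h2 := (Complex.hasDerivAt_log (slit1 hz)).comp z h1
  have h3 := h2.neg
  have e : (1 - z)⁻¹ = -((1 - z)⁻¹ * -1) := by ring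
  rw [e]; exact h3

lemma hh_hasDeriv {z : ℂ} (hz : ‖z‖ < 1) :
    HasDerivAt hh
      ((((1 - z)⁻¹ * Complex.sin (uu z) + uu z * (Complex.cos (uu z) * (1 - z)⁻¹)) *
          Complex.log (uu z + 3) -
        uu z * Complex.sin (uu z) * ((uu z + 3)⁻¹ * (1 - z)⁻¹)) /
        Complex.log (uu z + 3) ^ 2) z := by
  have hu := uu_hasDeriv hz
  have hs : HasDerivAt (fun w : ℂ => Complex.sin (uu w)) (Complex.cos (uu z) * (1 - z)⁻¹) z :=
    (Complex.hasDerivAt_sin (uu z)).comp z hu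
  have hnum := hu.mul hs
  have hden : HasDerivAt (fun w : ℂ => Complex.log (uu w + 3)) ((uu z + 3)⁻¹ * (1 - z)⁻¹) z :=
    by have h := (Complex.hasDerivAt_log (slit3 hz)).comp z (hu.add_const 3); exact h
  exact hnum.div hden (log3_ne hz)

lemma deriv_eval (v : ℝ) (hvpos : 0 < v) (hsin : Real.sin v = 0) (hcos : Real.cos v = 1) :
    deriv hh ((1 - Real.exp (-v) : ℝ) : ℂ) =
      ((v / (Real.exp (-v) * Real.log (v + 3)) : ℝ) : ℂ) := by
  set t : ℝ := Real.exp (-v) with htdef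
  have ht0 : 0 < t := Real.exp_pos _
  have ht1 : t < 1 := by
    rw [htdef, Real.exp_lt_one_iff]; linarith
  set z₀ : ℂ := ((1 - t : ℝ) : ℂ) with hz₀
  have hznorm : ‖z₀‖ < 1 := by
    rw [hz₀, Complex.norm_real, Real.norm_eq_abs, abs_of_nonneg (by linarith)]; linarith
  have h1z : 1 - z₀ = (t : ℂ) := by rw [hz₀]; push_cast; ring
  have huu : uu z₀ = (v : ℂ) := by
    rw [uu, h1z, ← Complex.ofReal_log ht0.le, htdef, Real.log_exp]
    push_cast; ring
  have hsinv : Complex.sin (v : ℂ) = 0 := by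
    rw [← Complex.ofReal_sin, hsin]; norm_num
  have hcosv : Complex.cos (v : ℂ) = 1 := by
    rw [← Complex.ofReal_cos, hcos]; norm_num
  have hlog3 : Complex.log (uu z₀ + 3) = ((Real.log (v + 3) : ℝ) : ℂ) := by
    rw [huu]
    have : (v : ℂ) + 3 = ((v + 3 : ℝ) : ℂ) := by push_cast; ring
    rw [this, ← Complex.ofReal_log (by linarith)]
  have hLpos : 0 < Real.log (v + 3) := Real.log_pos (by linarith)
  have hd := (hh_hasDeriv hznorm).deriv
  rw [hd, hlog3, huu, hsinv, hcosv, h1z]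
  have htne : (t : ℂ) ≠ 0 := by exact_mod_cast ht0.ne'
  have hLne : ((Real.log (v + 3) : ℝ) : ℂ) ≠ 0 := by
    exact_mod_cast hLpos.ne'
  push_cast
  field_simp
  ring

set_option maxHeartbeats 1000000 in
theorem X0_not_subset_bloch :
    ∃ h : ℂ → ℂ, DifferentiableOn ℂ h (ball (0 : ℂ) 1) ∧
      (∀ ε : ℝ, 0 < ε → ∃ δ : ℝ, δ < 1 ∧ ∀ z ∈ ball (0 : ℂ) 1, δ < ‖z‖ →
        ‖h z‖ / Real.log (Real.exp 1 / (1 - ‖z‖)) < ε) ∧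
      ¬ ∃ M : ℝ, ∀ z ∈ ball (0 : ℂ) 1, (1 - ‖z‖ ^ 2) * ‖deriv h z‖ ≤ M := by
  refine ⟨hh, ?_, ?_, ?_⟩
  · -- differentiability
    intro z hz
    exact (hh_hasDeriv (mem_ball_zero_iff.mp hz)).differentiableAt.differentiableWithinAt
  · -- growth
    intro ε hε
    set R : ℝ := Real.exp (32 / ε) with hRdef
    have hR1 : 1 ≤ R := Real.one_le_exp (by positivity)
    set K : ℝ := 16 * (R + 3) with hKdef
    have hK0 : 0 < K := by positivity
    refine ⟨1 - Real.exp (-(K / ε)), by linarith [Real.exp_pos (-(K / ε))], ?_⟩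
    intro z hzball hδ
    have hz : ‖z‖ < 1 := mem_ball_zero_iff.mp hzball
    set x : ℝ := (uu z).re with hxdef
    have hxm1 : -1 ≤ x := uu_re_ge hz
    have h1mz : 0 < 1 - ‖z‖ := by linarith
    have hLdef : Real.log (Real.exp 1 / (1 - ‖z‖)) = 1 - Real.log (1 - ‖z‖) := by
      rw [Real.log_div (Real.exp_ne_zero 1) h1mz.ne', Real.log_exp]
    have hx_le : x ≤ -Real.log (1 - ‖z‖) := by
      rw [hxdef, uu_re]
      have hle : 1 - ‖z‖ ≤ ‖1 - z‖ := by
        have := norm_sub_norm_le (1 : ℂ) z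
        simpa using this
      have := Real.log_le_log h1mz hle
      linarith
    have hlog1mz : Real.log (1 - ‖z‖) ≤ 0 := Real.log_nonpos (by linarith) (by linarith [norm_nonneg z])
    have hL1 : 1 ≤ Real.log (Real.exp 1 / (1 - ‖z‖)) := by rw [hLdef]; linarith
    rw [div_lt_iff₀ (by linarith : (0:ℝ) < Real.log (Real.exp 1 / (1 - ‖z‖)))]
    have hbound := hh_bound hz
    rw [← hxdef] at hbound
    have hlog2 : (1:ℝ)/2 ≤ Real.log (x + 3) := by
      have h2 : Real.log 2 ≤ Real.log (x + 3) :=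
        Real.log_le_log (by norm_num) (by linarith)
      nlinarith [Real.log_two_gt_d9]
    by_cases hcase : x ≤ R
    · -- bounded region
      have habs : |x| ≤ R := abs_le.mpr ⟨by linarith, hcase⟩
      have hb2 : ‖hh z‖ ≤ K := by
        calc ‖hh z‖ ≤ 8 * (|x| + 2) / Real.log (x + 3) := hbound
        _ ≤ 8 * (R + 2) / (1/2) :=
            div_le_div₀ (by positivity) (by linarith) (by norm_num) hlog2
        _ ≤ K := by rw [hKdef]; linarith
      have hzlt : 1 - ‖z‖ < Real.exp (-(K / ε)) := by linarith
      have hloglt : Real.log (1 - ‖z‖) < -(K / ε) := by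
        have := Real.log_lt_log h1mz hzlt
        rwa [Real.log_exp] at this
      have hLgt : K / ε + 1 < Real.log (Real.exp 1 / (1 - ‖z‖)) := by
        rw [hLdef]; linarith
      have : ε * (K / ε + 1) < ε * Real.log (Real.exp 1 / (1 - ‖z‖)) :=
        mul_lt_mul_of_pos_left hLgt hε
      have hKe : ε * (K / ε + 1) = K + ε := by field_simp
      linarith
    · -- large x
      push_neg at hcase
      have hx0 : 0 < x := lt_of_lt_of_le (by linarith) hcase.le
      have hlogR : 32 / ε ≤ Real.log (x + 3) := by
        have h1 : Real.log R ≤ Real.log (x + 3) :=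
          Real.log_le_log (by positivity) (by linarith)
        rwa [hRdef, Real.log_exp] at h1
      have habs : |x| = x := abs_of_pos hx0
      have h32 : 0 < 32 / ε := by positivity
      have hb2 : ‖hh z‖ ≤ 8 * (x + 2) / (32 / ε) := by
        calc ‖hh z‖ ≤ 8 * (|x| + 2) / Real.log (x + 3) := hbound
        _ ≤ 8 * (x + 2) / (32 / ε) := by
            rw [habs]
            exact div_le_div₀ (by positivity) le_rfl h32 hlogR
      have heq : 8 * (x + 2) / (32 / ε) = ε * (x + 2) / 4 := by
        field_simp; ring
      have hLge : x + 1 ≤ Real.log (Real.exp 1 / (1 - ‖z‖)) := by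
        rw [hLdef]; linarith
      have : ε * (x + 2) / 4 < ε * (x + 1) := by nlinarith
      have : ‖hh z‖ < ε * (x + 1) := by rw [heq] at hb2; linarith
      nlinarith
  · -- not Bloch
    rintro ⟨M, hM⟩
    set m : ℝ := max M 0 with hm
    have hm0 : 0 ≤ m := le_max_right _ _
    obtain ⟨n, hn⟩ := exists_nat_gt (16 * m ^ 2 + 1)
    have hn1 : (1:ℝ) ≤ (n:ℝ) := by nlinarith
    set v : ℝ := 2 * Real.pi * n with hv
    have hpi := Real.pi_gt_three
    have hv6 : 6 * (n:ℝ) ≤ v := by nlinarith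
    have hv1 : 1 ≤ v := by nlinarith
    have hvgt : 16 * m ^ 2 < v := by nlinarith
    have hsin : Real.sin v = 0 := by
      have : v = ((2 * n : ℤ) : ℝ) * Real.pi := by push_cast [hv]; ring
      rw [this, Real.sin_int_mul_pi]
    have hcos : Real.cos v = 1 := by
      have : v = ((n : ℤ) : ℝ) * (2 * Real.pi) := by push_cast [hv]; ring
      rw [this, Real.cos_int_mul_two_pi]
    set t : ℝ := Real.exp (-v) with htdef
    have ht0 : 0 < t := Real.exp_pos _
    have ht1 : t < 1 := by rw [htdef, Real.exp_lt_one_iff]; linarith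
    set z₀ : ℂ := ((1 - t : ℝ) : ℂ) with hz₀
    have hnorm : ‖z₀‖ = 1 - t := by
      rw [hz₀, Complex.norm_real, Real.norm_eq_abs, abs_of_nonneg (by linarith)]
    have hmem : z₀ ∈ ball (0:ℂ) 1 := by
      rw [mem_ball_zero_iff, hnorm]; linarith
    have hderiv := deriv_eval v (by linarith) hsin hcos
    set Lr : ℝ := Real.log (v + 3) with hLr
    have hLpos : 0 < Lr := Real.log_pos (by linarith)
    have hnd : ‖deriv hh z₀‖ = v / (t * Lr) := by
      rw [hz₀, hderiv, Complex.norm_real, Real.norm_eq_abs,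
        abs_of_nonneg (by positivity)]
    have hMz := hM z₀ hmem
    rw [hnorm, hnd] at hMz
    -- now show M < (1 - (1-t)^2) * (v / (t * Lr))
    have hsv : Real.sqrt v * Real.sqrt v = v := Real.mul_self_sqrt (by linarith)
    have hsv0 : 0 < Real.sqrt v := Real.sqrt_pos.mpr (by linarith)
    have hLr_le : Lr ≤ 4 * Real.sqrt v := by
      have h1 : Lr = 2 * Real.log (Real.sqrt (v + 3)) := by
        rw [hLr, Real.log_sqrt (by linarith)]; ring
      have h2 : Real.log (Real.sqrt (v + 3)) ≤ Real.sqrt (v + 3) - 1 :=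
        Real.log_le_sub_one_of_pos (Real.sqrt_pos.mpr (by linarith))
      have h3 : Real.sqrt (v + 3) ≤ 2 * Real.sqrt v := by
        have h4 : Real.sqrt (v + 3) ≤ Real.sqrt (4 * v) :=
          Real.sqrt_le_sqrt (by linarith)
        have h5 : Real.sqrt (4 * v) = 2 * Real.sqrt v := by
          rw [Real.sqrt_mul (by norm_num : (0:ℝ) ≤ 4) v,
            show (4:ℝ) = 2 ^ 2 by norm_num,
            Real.sqrt_sq (by norm_num : (0:ℝ) ≤ 2)]
        linarith
      linarith
    have hsm : 4 * m < Real.sqrt v := by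
      have h6 : (4 * m) ^ 2 < v := by nlinarith
      exact (Real.lt_sqrt (by positivity)).mpr h6
    have hratio : m < v / Lr := by
      rw [lt_div_iff₀ hLpos]
      calc m * Lr ≤ m * (4 * Real.sqrt v) :=
        mul_le_mul_of_nonneg_left hLr_le hm0
      _ = (4 * m) * Real.sqrt v := by ring
      _ < Real.sqrt v * Real.sqrt v := by
        exact mul_lt_mul_of_pos_right hsm hsv0
      _ = v := hsv
    have hexp : (1 - (1 - t) ^ 2) * (v / (t * Lr)) = (2 - t) * (v / Lr) := by
      have key : ∀ a b c : ℝ, b ≠ 0 → c ≠ 0 →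
          (1 - (1 - b) ^ 2) * (a / (b * c)) = (2 - b) * (a / c) := by
        intro a b c hb hc; field_simp; ring
      exact key v t Lr ht0.ne' hLpos.ne'
    have hge : v / Lr ≤ (2 - t) * (v / Lr) := by
      have hvlr : 0 ≤ v / Lr := div_nonneg (by linarith) hLpos.le
      have h7 := mul_le_mul_of_nonneg_right (by linarith : (1:ℝ) ≤ 2 - t) hvlr
      linarith
    rw [hexp] at hMz
    have : M ≤ m := le_max_left _ _
    linarith
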